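/- Let μ₁ satisfy H1 (continuous, μ₁(0)=0, strictly increasing, bounded by m₁), and let α, k₁, D₂, S₁ⁱⁿ > 0 and c ∈ (0, S₁ⁱⁿ/(αk₁)). Define F(x) = μ₁(S₁ⁱⁿ − αk₁x) − αD₂(x − c)/x on [c, S₁ⁱⁿ/(αk₁)]. Then F is strictly decreasing, F(c) = μ₁(S₁ⁱⁿ − αk₁c) > 0, and F(S₁ⁱⁿ/(αk₁)) = −αD₂(S₁ⁱⁿ/(αk₁) − c)/(S₁ⁱⁿ/(αk₁)) < 0; hence F has a unique zero in (c, S₁ⁱⁿ/(αk₁)). -/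

import Mathlib

/-- Explicit version of Lemma 2 (lemH1): with `μ₁` satisfying H1, the function
`F(x) = μ₁(S₁ⁱⁿ − αk₁x) − αD₂(x − c)/x` is strictly decreasing on
`[c, S₁ⁱⁿ/(αk₁)]`, positive at `c`, negative at `S₁ⁱⁿ/(αk₁)`, and has a unique
zero in `(c, S₁ⁱⁿ/(αk₁))`. -/
theorem unique_zero_F_lemH1
    (α k₁ D₂ Sin m₁ c : ℝ)
    (hα : 0 < α) (hk₁ : 0 < k₁) (hD₂ : 0 < D₂) (hSin : 0 < Sin) (hm₁ : 0 < m₁)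
    (hc : c ∈ Set.Ioo 0 (Sin / (α * k₁)))
    (μ₁ : ℝ → ℝ)
    (hμc : ContinuousOn μ₁ (Set.Ici 0))
    (hμ0 : μ₁ 0 = 0)
    (hμmono : StrictMonoOn μ₁ (Set.Ici 0))
    (hμbdd : ∀ s, 0 ≤ s → μ₁ s < m₁)
    (F : ℝ → ℝ)
    (hF : ∀ x, F x = μ₁ (Sin - α * k₁ * x) - α * D₂ * (x - c) / x) :
    StrictAntiOn F (Set.Icc c (Sin / (α * k₁))) ∧
    F c = μ₁ (Sin - α * k₁ * c) ∧ 0 < F c ∧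
    F (Sin / (α * k₁)) =
      -(α * D₂ * (Sin / (α * k₁) - c) / (Sin / (α * k₁))) ∧
    F (Sin / (α * k₁)) < 0 ∧
    ∃! x, x ∈ Set.Ioo c (Sin / (α * k₁)) ∧ F x = 0 := by

  obtain ⟨hc0, hcb⟩ := hc
  set b := Sin / (α * k₁) with hb
  have hαk : 0 < α * k₁ := mul_pos hα hk₁
  have hbpos : 0 < b := lt_trans hc0 hcb
  have hSinb : α * k₁ * b = Sin := by
    rw [hb]; field_simp
  -- strict anti
  have hanti : StrictAntiOn F (Set.Icc c b) := by
    intro x hx y hy hxy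
    have hx0 : 0 < x := lt_of_lt_of_le hc0 hx.1
    have hy0 : 0 < y := lt_of_lt_of_le hc0 hy.1
    have hxb : α * k₁ * x ≤ Sin := by nlinarith [hx.2]
    have hyb : α * k₁ * y ≤ Sin := by nlinarith [hy.2]
    have hμ : μ₁ (Sin - α*k₁*y) < μ₁ (Sin - α*k₁*x) := by
      apply hμmono
      · simp only [Set.mem_Ici]; linarith
      · simp only [Set.mem_Ici]; linarith
      · nlinarith
    have hg : α*D₂*(x-c)/x < α*D₂*(y-c)/y := by
      rw [div_lt_div_iff₀ hx0 hy0]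
      nlinarith [mul_pos (mul_pos (mul_pos hα hD₂) hc0) (sub_pos.2 hxy)]
    rw [hF x, hF y]; linarith
  have hFc : F c = μ₁ (Sin - α * k₁ * c) := by
    rw [hF c]; simp
  have hFcpos : 0 < F c := by
    rw [hFc, ← hμ0]
    apply hμmono
    · exact Set.mem_Ici.2 le_rfl
    · simp only [Set.mem_Ici]; nlinarith
    · nlinarith
  have hFb : F b = -(α * D₂ * (b - c) / b) := by
    rw [hF b]
    have : Sin - α * k₁ * b = 0 := by linarith
    rw [this, hμ0]; ring
  have hFbneg : F b < 0 := by
    rw [hFb]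
    have : 0 < α * D₂ * (b - c) / b :=
      div_pos (mul_pos (mul_pos hα hD₂) (by linarith)) hbpos
    linarith
  -- continuity
  have hcont : ContinuousOn F (Set.Icc c b) := by
    have h1 : ContinuousOn (fun x => μ₁ (Sin - α * k₁ * x)) (Set.Icc c b) := by
      apply hμc.comp ((continuous_const.sub (continuous_const.mul continuous_id)).continuousOn)
      intro x hx
      simp only [Set.mem_Ici, id_eq, Pi.sub_apply, Pi.mul_apply]
      nlinarith [mul_le_mul_of_nonneg_left hx.2 hαk.le]
    have h2 : ContinuousOn (fun x => α * D₂ * (x - c) / x) (Set.Icc c b) := by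
      apply ContinuousOn.div
      · exact (continuous_const.mul (continuous_id.sub continuous_const)).continuousOn
      · exact continuousOn_id
      · intro x hx
        exact ne_of_gt (lt_of_lt_of_le hc0 hx.1)
    exact (h1.sub h2).congr (fun x _ => hF x)
  -- existence of zero
  have hmem : (0:ℝ) ∈ Set.Icc (F b) (F c) := ⟨le_of_lt hFbneg, le_of_lt hFcpos⟩
  obtain ⟨x, hxmem, hxz⟩ := intermediate_value_Icc' (le_of_lt hcb) hcont hmem
  have hxne_c : x ≠ c := by
    rintro rfl; exact absurd hxz (by linarith)
  have hxne_b : x ≠ b := by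
    rintro rfl; exact absurd hxz (by linarith)
  have hxIoo : x ∈ Set.Ioo c b :=
    ⟨lt_of_le_of_ne hxmem.1 (Ne.symm hxne_c), lt_of_le_of_ne hxmem.2 hxne_b⟩
  refine ⟨hanti, hFc, hFcpos, hFb, hFbneg, x, ⟨hxIoo, hxz⟩, ?_⟩
  rintro y ⟨hyIoo, hyz⟩
  by_contra hne
  rcases lt_or_gt_of_ne hne with h | h
  · have := hanti (Set.mem_Icc_of_Ioo hyIoo) (Set.mem_Icc_of_Ioo hxIoo) h
    rw [hxz, hyz] at this; exact lt_irrefl 0 this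
  · have := hanti (Set.mem_Icc_of_Ioo hxIoo) (Set.mem_Icc_of_Ioo hyIoo) h
    rw [hxz, hyz] at this; exact lt_irrefl 0 this
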